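/- Let u : ℝ → ℝ be continuously differentiable on [0,1] with u(0) = 0 and u(1) = 0. Then (sup_{x ∈ [0,1]} |u(x)|)² ≤ 2 (∫₀¹ u(x)² dx)^{1/2} (∫₀¹ u'(x)² dx)^{1/2} (Agmon inequality). -/

import Mathlib

open MeasureTheory Set intervalIntegral

/-- Agmon inequality on the unit interval:
if `u` is continuously differentiable on `[0,1]` with `u 0 = 0` and `u 1 = 0`,
then `(sup_{x ∈ [0,1]} |u x|)² ≤ 2 √(∫₀¹ u²) √(∫₀¹ u'²)`. -/
theorem agmon_unit_interval (u u' : ℝ → ℝ)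
    (hderiv : ∀ x ∈ Set.Icc (0:ℝ) 1, HasDerivWithinAt u (u' x) (Set.Icc (0:ℝ) 1) x)
    (hcont : ContinuousOn u' (Set.Icc (0:ℝ) 1))
    (h0 : u 0 = 0) (h1 : u 1 = 0) :
    (⨆ x ∈ Set.Icc (0:ℝ) 1, |u x|) ^ 2 ≤
      2 * Real.sqrt (∫ x in (0:ℝ)..1, (u x) ^ 2) *
        Real.sqrt (∫ x in (0:ℝ)..1, (u' x) ^ 2) := by
  have h01 : (0:ℝ) ≤ 1 := zero_le_one
  have huc : ContinuousOn u (Icc 0 1) := fun x hx => (hderiv x hx).continuousWithinAt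
  set A := ∫ x in (0:ℝ)..1, (u x) ^ 2 with hAdef
  set B := ∫ x in (0:ℝ)..1, (u' x) ^ 2 with hBdef
  set C := ∫ x in (0:ℝ)..1, |u x| * |u' x| with hCdef
  have hIcc : Set.uIcc (0:ℝ) 1 = Icc 0 1 := Set.uIcc_of_le h01
  have hiu2 : IntervalIntegrable (fun x => u x ^ 2) volume 0 1 :=
    ContinuousOn.intervalIntegrable (by rw [hIcc]; exact huc.pow 2)
  have hiu'2 : IntervalIntegrable (fun x => u' x ^ 2) volume 0 1 :=
    ContinuousOn.intervalIntegrable (by rw [hIcc]; exact hcont.pow 2)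
  have habs : ContinuousOn (fun x => |u x| * |u' x|) (Icc 0 1) := huc.abs.mul hcont.abs
  have hiabs : IntervalIntegrable (fun x => |u x| * |u' x|) volume 0 1 :=
    ContinuousOn.intervalIntegrable (by rw [hIcc]; exact habs)
  have hA : 0 ≤ A := intervalIntegral.integral_nonneg h01 fun x _ => sq_nonneg _
  have hB : 0 ≤ B := intervalIntegral.integral_nonneg h01 fun x _ => sq_nonneg _
  have hC : 0 ≤ C := intervalIntegral.integral_nonneg h01 fun x _ =>
    mul_nonneg (abs_nonneg _) (abs_nonneg _)
  -- Cauchy–Schwarz via the discriminant trick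
  have hquad : ∀ t : ℝ, 0 ≤ B * (t * t) + (-2 * C) * t + A := by
    intro t
    have hnn : (0:ℝ) ≤ ∫ x in (0:ℝ)..1, (|u x| - t * |u' x|) ^ 2 :=
      intervalIntegral.integral_nonneg h01 fun x _ => sq_nonneg _
    have hexp : (∫ x in (0:ℝ)..1, (|u x| - t * |u' x|) ^ 2)
        = A + ((t * t) * B - (2 * t) * C) := by
      have heq : ∀ x : ℝ, (|u x| - t * |u' x|) ^ 2
          = u x ^ 2 + ((t * t) * (u' x ^ 2) - (2 * t) * (|u x| * |u' x|)) := by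
        intro x
        have h1 := sq_abs (u x)
        have h2 := sq_abs (u' x)
        nlinarith [sq_nonneg (|u x| - t * |u' x|)]
      calc (∫ x in (0:ℝ)..1, (|u x| - t * |u' x|) ^ 2)
          = ∫ x in (0:ℝ)..1,
              (u x ^ 2 + ((t * t) * (u' x ^ 2) - (2 * t) * (|u x| * |u' x|))) := by
            apply intervalIntegral.integral_congr
            intro x _; exact heq x
        _ = A + ((t * t) * B - (2 * t) * C) := by
            rw [intervalIntegral.integral_add hiu2
              (((hiu'2.const_mul (t * t))).sub (hiabs.const_mul (2 * t))),
              intervalIntegral.integral_sub (hiu'2.const_mul (t * t))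
                (hiabs.const_mul (2 * t)),
              intervalIntegral.integral_const_mul, intervalIntegral.integral_const_mul]
    linarith [hexp ▸ hnn]
  have hdisc : discrim B (-2 * C) A ≤ 0 := discrim_le_zero hquad
  have hCS : C ^ 2 ≤ A * B := by
    rw [discrim] at hdisc; nlinarith
  have hCle : C ≤ Real.sqrt A * Real.sqrt B := by
    rw [← Real.sqrt_mul hA B]
    have : C ≤ Real.sqrt (C ^ 2) := by rw [Real.sqrt_sq hC]
    exact this.trans (Real.sqrt_le_sqrt hCS)
  -- pointwise bound via FTC
  have hpt : ∀ x ∈ Icc (0:ℝ) 1, u x ^ 2 ≤ 2 * C := by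
    intro x hx
    have hsub : Icc (0:ℝ) x ⊆ Icc 0 1 := Icc_subset_Icc le_rfl hx.2
    have hint : IntervalIntegrable (fun t => 2 * u t * u' t) volume 0 x :=
      ContinuousOn.intervalIntegrable (by
        rw [Set.uIcc_of_le hx.1]
        exact ((continuousOn_const.mul (huc.mono hsub)).mul (hcont.mono hsub)))
    have hftc : ∫ t in (0:ℝ)..x, 2 * u t * u' t = u x ^ 2 - u 0 ^ 2 := by
      apply intervalIntegral.integral_eq_sub_of_hasDeriv_right_of_le hx.1
        ((huc.mono hsub).pow 2) _ hint
      intro t ht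
      have htmem : t ∈ Icc (0:ℝ) 1 := ⟨ht.1.le, (ht.2.trans_le hx.2).le⟩
      have hd : HasDerivWithinAt (fun y => u y ^ 2) (2 * u t * u' t) (Icc 0 1) t := by
        have := (hderiv t htmem).fun_pow 2
        simpa [pow_one, mul_comm, mul_assoc] using this
      exact hd.mono_of_mem_nhdsWithin
        (Icc_mem_nhdsGT_of_mem ⟨ht.1.le, ht.2.trans_le hx.2⟩)
    have h2 : u x ^ 2 = ∫ t in (0:ℝ)..x, 2 * u t * u' t := by
      rw [hftc, h0]; ring
    have hmono1 : (∫ t in (0:ℝ)..x, 2 * u t * u' t)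
        ≤ ∫ t in (0:ℝ)..x, 2 * (|u t| * |u' t|) := by
      apply intervalIntegral.integral_mono_on hx.1 hint
        ((hiabs.const_mul 2).mono_set (by rw [Set.uIcc_of_le hx.1, hIcc]; exact hsub))
      intro t _
      calc 2 * u t * u' t ≤ 2 * |u t * u' t| := by
            rw [mul_assoc]; exact mul_le_mul_of_nonneg_left (le_abs_self _) (by norm_num)
        _ = 2 * (|u t| * |u' t|) := by rw [abs_mul]
    have hmono2 : (∫ t in (0:ℝ)..x, 2 * (|u t| * |u' t|))
        ≤ ∫ t in (0:ℝ)..1, 2 * (|u t| * |u' t|) := by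
      apply intervalIntegral.integral_mono_interval le_rfl hx.1 hx.2
      · filter_upwards with t
        exact mul_nonneg (by norm_num) (mul_nonneg (abs_nonneg _) (abs_nonneg _))
      · exact hiabs.const_mul 2
    have h3 : (∫ t in (0:ℝ)..1, 2 * (|u t| * |u' t|)) = 2 * C := by
      rw [hCdef, ← intervalIntegral.integral_const_mul]
    linarith [h2 ▸ (hmono1.trans (hmono2.trans_eq h3))]
  set R := 2 * Real.sqrt A * Real.sqrt B with hRdef
  have hR : 0 ≤ R := by positivity
  have hptR : ∀ x ∈ Icc (0:ℝ) 1, u x ^ 2 ≤ R := by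
    intro x hx
    calc u x ^ 2 ≤ 2 * C := hpt x hx
      _ ≤ R := by rw [hRdef, mul_assoc]; linarith
  have hS0 : (0:ℝ) ≤ ⨆ x ∈ Icc (0:ℝ) 1, |u x| :=
    Real.iSup_nonneg fun x => Real.iSup_nonneg fun _ => abs_nonneg _
  have hS : (⨆ x ∈ Icc (0:ℝ) 1, |u x|) ≤ Real.sqrt R := by
    apply Real.iSup_le _ (Real.sqrt_nonneg _)
    intro x
    apply Real.iSup_le _ (Real.sqrt_nonneg _)
    intro hx
    have : |u x| = Real.sqrt (u x ^ 2) := by rw [Real.sqrt_sq_eq_abs]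
    rw [this]
    exact Real.sqrt_le_sqrt (hptR x hx)
  calc (⨆ x ∈ Icc (0:ℝ) 1, |u x|) ^ 2 ≤ Real.sqrt R ^ 2 :=
        pow_le_pow_left₀ hS0 hS 2
    _ = R := Real.sq_sqrt hR
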